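/- Let p be prime, s ≥ 2 an integer, and n, k positive integers with distinct evaluation points α_1,...,α_n ∈ F_p. If k < (n+1)·log(s)/(2·log(p) + log(s)), then there exist functions τ_1,...,τ_n : F_p → Fin s such that the map sending each polynomial f ∈ F_p[x] of degree < k to (τ_1(f(α_1)), ..., τ_n(f(α_n))) is injective. -/

import Mathlib

open Finset Polynomial in
private lemma count_constrained (p s : ℕ) [NeZero p] {a b : ZMod p} (hab : a ≠ b) :
    Fintype.card {h : ZMod p → Fin s // h a = h b} ≤ s ^ (p - 1) := by
  classical
  have hcod : Fintype.card ({x : ZMod p // x ≠ b} → Fin s) = s ^ (p - 1) := by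
    rw [Fintype.card_fun, Fintype.card_fin]
    congr 1
    have := Fintype.card_subtype_compl (fun x : ZMod p => x = b)
    simpa [Fintype.card_subtype_eq, ZMod.card] using this
  rw [← hcod]
  apply Fintype.card_le_of_injective (fun h => fun x => h.1 x.1)
  intro h1 h2 he
  apply Subtype.ext
  funext x
  by_cases hx : x = b
  · subst hx
    have ha : h1.1 a = h2.1 a := congrFun he ⟨a, hab⟩
    rw [← h1.2, ← h2.2]
    exact ha
  · exact congrFun he ⟨x, hx⟩

private lemma pow_arith (s p n c : ℕ) (hp : 1 ≤ p) (hcn : c ≤ n) :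
    ((s ^ (p-1)) ^ c * (s ^ p) ^ (n - c)) * s ^ c = s ^ (p * n) := by
  obtain ⟨d, rfl⟩ : ∃ d, n = c + d := ⟨n - c, by omega⟩
  obtain ⟨q, rfl⟩ : ∃ q, p = q + 1 := ⟨p - 1, by omega⟩
  rw [← pow_mul, ← pow_mul, ← pow_add, ← pow_add]
  congr 1
  simp only [Nat.add_sub_cancel, Nat.add_sub_cancel_left]
  ring

open Finset Polynomial in
private lemma count_bad (p s n : ℕ) [NeZero p] (a b : Fin n → ZMod p) :
    Fintype.card {τ : Fin n → ZMod p → Fin s // ∀ i, τ i (a i) = τ i (b i)} *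
      s ^ (Finset.univ.filter (fun i => a i ≠ b i)).card ≤ s ^ (p * n) := by
  classical
  rw [Fintype.card_congr (Equiv.subtypePiEquivPi (p := fun i (h : ZMod p → Fin s) => h (a i) = h (b i))),
    Fintype.card_pi]
  set c := (Finset.univ.filter (fun i => a i ≠ b i)).card with hc
  have hcn : c ≤ n := by
    simpa using Finset.card_filter_le Finset.univ (fun i => a i ≠ b i)
  have hstep : ∏ i : Fin n, Fintype.card {h : ZMod p → Fin s // h (a i) = h (b i)} ≤
      ∏ i : Fin n, (if a i ≠ b i then s ^ (p-1) else s ^ p) := by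
    apply Finset.prod_le_prod'
    intro i _
    by_cases hi : a i ≠ b i
    · simpa [hi] using count_constrained p s hi
    · simp only [hi, if_false]
      calc Fintype.card {h : ZMod p → Fin s // h (a i) = h (b i)}
          ≤ Fintype.card (ZMod p → Fin s) := Fintype.card_subtype_le _
        _ = s ^ p := by rw [Fintype.card_fun, Fintype.card_fin, ZMod.card]
  have hsplit : (Finset.univ.filter (fun i => ¬ (a i ≠ b i))).card = n - c := by
    rw [Finset.filter_not, Finset.card_sdiff_of_subset (Finset.filter_subset _ _)]
    simp [hc]
  have hprod : (∏ i : Fin n, (if a i ≠ b i then s ^ (p-1) else s ^ p)) =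
      (s ^ (p-1)) ^ c * (s ^ p) ^ (n - c) := by
    rw [Finset.prod_ite (fun _ => s ^ (p-1)) (fun _ => s ^ p), Finset.prod_const,
      Finset.prod_const, hsplit, ← hc]
  calc _ ≤ ((s ^ (p-1)) ^ c * (s ^ p) ^ (n - c)) * s ^ c :=
        Nat.mul_le_mul_right _ (le_trans hstep (le_of_eq hprod))
    _ = s ^ (p * n) := pow_arith s p n c (NeZero.pos p) hcn

private noncomputable def polyOf (p k : ℕ) (v : Fin k → ZMod p) : Polynomial (ZMod p) :=
  ∑ i : Fin k, Polynomial.C (v i) * Polynomial.X ^ (i : ℕ)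

private lemma polyOf_degree (p k : ℕ) (v : Fin k → ZMod p) :
    (polyOf p k v).degree < (k : WithBot ℕ) := by
  apply lt_of_le_of_lt (Polynomial.degree_sum_le _ _)
  rw [Finset.sup_lt_iff (by exact_mod_cast WithBot.bot_lt_coe k)]
  intro i _
  exact lt_of_le_of_lt (Polynomial.degree_C_mul_X_pow_le _ _)
    (by exact_mod_cast WithBot.coe_lt_coe.mpr i.2)

private lemma polyOf_rep (p k : ℕ) (hk : 0 < k) (f : Polynomial (ZMod p))
    (hf : f.degree < (k : WithBot ℕ)) : polyOf p k (fun i => f.coeff i) = f := by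
  have hnd : f.natDegree < k := by
    rcases eq_or_ne f 0 with rfl | h
    · simpa using hk
    · exact (Polynomial.natDegree_lt_iff_degree_lt h).mpr hf
  rw [polyOf]
  conv_rhs => rw [f.as_sum_range' k hnd]
  rw [← Fin.sum_univ_eq_sum_range (fun i => Polynomial.monomial i (f.coeff i)) k]
  exact Finset.sum_congr rfl fun i _ => Polynomial.C_mul_X_pow_eq_monomial

open Finset Polynomial in
private lemma eval_ne_card (p n k : ℕ) [Fact p.Prime] (hk : 0 < k) (α : Fin n → ZMod p)
    (hα : Function.Injective α) (f g : Polynomial (ZMod p))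
    (hf : f.degree < (k : WithBot ℕ)) (hg : g.degree < (k : WithBot ℕ)) (hne : f ≠ g) :
    n + 1 - k ≤ (Finset.univ.filter (fun i => f.eval (α i) ≠ g.eval (α i))).card := by
  classical
  set h := f - g with hh
  have hh0 : h ≠ 0 := sub_ne_zero.mpr hne
  have hdeg : h.natDegree < k := by
    rw [Polynomial.natDegree_lt_iff_degree_lt hh0]
    exact lt_of_le_of_lt (Polynomial.degree_sub_le f g) (max_lt hf hg)
  have hcompl : (Finset.univ.filter (fun i => ¬ f.eval (α i) ≠ g.eval (α i))).card ≤ k - 1 := by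
    have hsub : ∀ i ∈ Finset.univ.filter (fun i => ¬ f.eval (α i) ≠ g.eval (α i)),
        α i ∈ h.roots.toFinset := by
      intro i hi
      simp only [Finset.mem_filter, not_not] at hi
      rw [Multiset.mem_toFinset, Polynomial.mem_roots hh0]
      simp [hh, Polynomial.IsRoot, sub_eq_zero, hi.2]
    have hinj : Set.InjOn (fun i => α i)
        (Finset.univ.filter (fun i => ¬ f.eval (α i) ≠ g.eval (α i))) :=
      fun i _ j _ hij => hα hij
    calc (Finset.univ.filter (fun i => ¬ f.eval (α i) ≠ g.eval (α i))).card
        ≤ h.roots.toFinset.card := Finset.card_le_card_of_injOn _ hsub hinj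
      _ ≤ Multiset.card h.roots := h.roots.toFinset_card_le
      _ ≤ h.natDegree := h.card_roots'
      _ ≤ k - 1 := by omega
  have hnot := Finset.filter_not (s := (Finset.univ : Finset (Fin n)))
    (p := fun i => f.eval (α i) ≠ g.eval (α i))
  have hcard : (Finset.univ.filter (fun i => f.eval (α i) ≠ g.eval (α i))).card
      + (Finset.univ.filter (fun i => ¬ f.eval (α i) ≠ g.eval (α i))).card = n := by
    rw [hnot, Finset.card_sdiff_of_subset (Finset.filter_subset _ _)]
    have := Finset.card_filter_le (Finset.univ : Finset (Fin n))
      (fun i => f.eval (α i) ≠ g.eval (α i))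
    simp only [Finset.card_univ, Fintype.card_fin] at *
    omega
  omega

theorem stmt_3 (p s n k : ℕ) (hp : p.Prime) (hs : 2 ≤ s) (hn : 0 < n) (hk : 0 < k)
    (α : Fin n → ZMod p) (hα : Function.Injective α)
    (hksmall : (k : ℝ) < (n + 1) * Real.log s / (2 * Real.log p + Real.log s)) :
    ∃ τ : Fin n → ZMod p → Fin s,
      ∀ f g : Polynomial (ZMod p), f.degree < (k : WithBot ℕ) → g.degree < (k : WithBot ℕ) →
        (∀ i, τ i (f.eval (α i)) = τ i (g.eval (α i))) → f = g := by
  classical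
  haveI : Fact p.Prime := ⟨hp⟩
  haveI : NeZero p := ⟨hp.pos.ne'⟩
  have hp2 : 2 ≤ p := hp.two_le
  have hs0 : 0 < s := by omega
  have hs1 : 1 ≤ s := by omega
  -- Step 1: from the hypothesis on k, derive k ≤ n and p^(2k) < s^(n+1-k)
  have hlogp : 0 < Real.log p := Real.log_pos (by exact_mod_cast hp.one_lt)
  have hlogs : 0 < Real.log s := Real.log_pos (by exact_mod_cast hs)
  have hk' : (0:ℝ) < k := by exact_mod_cast hk
  have hD : (0:ℝ) < 2 * Real.log p + Real.log s := by positivity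
  have h1 : (k:ℝ) * (2 * Real.log p + Real.log s) < (n + 1) * Real.log s :=
    (lt_div_iff₀ hD).mp hksmall
  have h2 : 2 * (k:ℝ) * Real.log p < ((n:ℝ) + 1 - k) * Real.log s := by nlinarith
  have hkn : k ≤ n := by
    by_contra hcon
    push_neg at hcon
    have h3 : ((n:ℝ) + 1 - k) ≤ 0 := by
      have : (n:ℝ) + 1 ≤ k := by exact_mod_cast hcon
      linarith
    nlinarith
  set m := n + 1 - k with hm
  have hpow : p ^ (2*k) < s ^ m := by
    have hmc : ((m : ℕ) : ℝ) = (n:ℝ) + 1 - k := by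
      rw [hm]
      push_cast [Nat.cast_sub (by omega : k ≤ n + 1)]
      ring
    have hlt : ((p:ℝ)) ^ (2*k) < (s:ℝ) ^ m := by
      have hplt : (0:ℝ) < (p:ℝ) ^ (2*k) := by positivity
      have hslt : (0:ℝ) < (s:ℝ) ^ m := by positivity
      have hlog2 : Real.log ((p:ℝ) ^ (2*k)) < Real.log ((s:ℝ) ^ m) := by
        rw [Real.log_pow, Real.log_pow, hmc]
        push_cast
        linarith [h2]
      exact (Real.log_lt_log_iff hplt hslt).mp hlog2
    exact_mod_cast hlt
  -- Step 2: counting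
  set Bad : ((Fin k → ZMod p) × (Fin k → ZMod p)) → Finset (Fin n → ZMod p → Fin s) :=
    fun v =>
      if polyOf p k v.1 = polyOf p k v.2 then ∅ else
        Finset.univ.filter (fun τ => ∀ i,
          τ i ((polyOf p k v.1).eval (α i)) = τ i ((polyOf p k v.2).eval (α i))) with hBadDef
  have hmn : m ≤ p * n := by
    have h4 : n ≤ p * n := Nat.le_mul_of_pos_left n hp.pos
    omega
  have hBadCard : ∀ v, (Bad v).card ≤ s ^ (p * n - m) := by
    intro v
    rw [hBadDef]
    by_cases heq : polyOf p k v.1 = polyOf p k v.2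
    · simp [heq]
    · simp only [if_neg heq]
      set a : Fin n → ZMod p := fun i => (polyOf p k v.1).eval (α i) with ha
      set b : Fin n → ZMod p := fun i => (polyOf p k v.2).eval (α i) with hb
      set c := (Finset.univ.filter (fun i => a i ≠ b i)).card with hc
      have hmc : m ≤ c := by
        rw [hc, ha, hb]
        exact eval_ne_card p n k hk α hα _ _ (polyOf_degree p k v.1) (polyOf_degree p k v.2) heq
      have hcount := count_bad p s n a b
      rw [← hc] at hcount
      have hfc : (Finset.univ.filter (fun τ : Fin n → ZMod p → Fin s =>
          ∀ i, τ i (a i) = τ i (b i))).card =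
          Fintype.card {τ : Fin n → ZMod p → Fin s // ∀ i, τ i (a i) = τ i (b i)} :=
        (Fintype.card_subtype _).symm
      rw [hfc]
      have hsm : 0 < s ^ m := pow_pos hs0 m
      apply Nat.le_of_mul_le_mul_right _ hsm
      calc Fintype.card {τ : Fin n → ZMod p → Fin s // ∀ i, τ i (a i) = τ i (b i)} * s ^ m
          ≤ Fintype.card {τ : Fin n → ZMod p → Fin s // ∀ i, τ i (a i) = τ i (b i)} * s ^ c :=
            Nat.mul_le_mul_left _ (Nat.pow_le_pow_right hs1 hmc)
        _ ≤ s ^ (p * n) := hcount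
        _ = s ^ (p * n - m) * s ^ m := by rw [← pow_add, Nat.sub_add_cancel hmn]
  have hTcard : Fintype.card (Fin n → ZMod p → Fin s) = s ^ (p * n) := by
    rw [Fintype.card_fun, Fintype.card_fun, Fintype.card_fin, Fintype.card_fin, ZMod.card,
      ← pow_mul, mul_comm]
  have hUnion : ((Finset.univ : Finset ((Fin k → ZMod p) × (Fin k → ZMod p))).biUnion Bad).card
      < Fintype.card (Fin n → ZMod p → Fin s) := by
    calc ((Finset.univ : Finset ((Fin k → ZMod p) × (Fin k → ZMod p))).biUnion Bad).card
        ≤ ∑ v : (Fin k → ZMod p) × (Fin k → ZMod p), (Bad v).card := Finset.card_biUnion_le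
      _ ≤ ∑ _v : (Fin k → ZMod p) × (Fin k → ZMod p), s ^ (p * n - m) :=
          Finset.sum_le_sum (fun v _ => hBadCard v)
      _ = p ^ (2*k) * s ^ (p * n - m) := by
          rw [Finset.sum_const, Finset.card_univ, Fintype.card_prod, Fintype.card_fun,
            Fintype.card_fin, ZMod.card, smul_eq_mul]
          congr 1
          rw [← pow_add]
          congr 1
          omega
      _ < s ^ m * s ^ (p * n - m) :=
          (Nat.mul_lt_mul_right (pow_pos hs0 _)).mpr hpow
      _ = s ^ (p * n) := by rw [← pow_add, Nat.add_sub_cancel' hmn]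
      _ = Fintype.card (Fin n → ZMod p → Fin s) := hTcard.symm
  obtain ⟨τ, hτ⟩ : ∃ τ : Fin n → ZMod p → Fin s,
      τ ∉ (Finset.univ : Finset ((Fin k → ZMod p) × (Fin k → ZMod p))).biUnion Bad := by
    by_contra hcon
    push_neg at hcon
    have hsub : (Finset.univ : Finset (Fin n → ZMod p → Fin s)) ⊆
        (Finset.univ : Finset ((Fin k → ZMod p) × (Fin k → ZMod p))).biUnion Bad :=
      fun x _ => hcon x
    have := Finset.card_le_card hsub
    rw [Finset.card_univ] at this
    omega
  refine ⟨τ, ?_⟩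
  intro f g hf hg heval
  by_contra hne
  apply hτ
  apply Finset.mem_biUnion.mpr
  refine ⟨(fun i => f.coeff i, fun i => g.coeff i), Finset.mem_univ _, ?_⟩
  have e1 : polyOf p k (fun i => f.coeff i) = f := polyOf_rep p k hk f hf
  have e2 : polyOf p k (fun i => g.coeff i) = g := polyOf_rep p k hk g hg
  rw [hBadDef]
  simp only [e1, e2, if_neg hne, Finset.mem_filter, Finset.mem_univ, true_and]
  exact heval
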